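/- Let $I = \bigcap_{j=1}^r \langle x_i^{w_i} : i \in A_j \rangle$ be a monomial ideal with a standard linear weighting $w = (w_1,\dots,w_n)$, and let $\tilde{I} = \bigcap_{j=1}^r \bigcap_{\substack{i \in A_j \\ 1 \le d_i \le w_i}} \langle x_{i,d_i} : i \in A_j \rangle$ be its polarization in $T = K[x_{i,d} : 1 \le i \le n, 1 \le d \le w_i]$. Then for every $s \ge 1$, the minimal degree of a monomial in $I^{(s)} = \bigcap_j \langle x_i^{w_i} : i \in A_j\rangle^s$ equals the minimal degree of a monomial in $\tilde{I}^{(s)} = \bigcap_j \bigcap_{d} \langle x_{i,d_i} : i \in A_j \rangle^s$, i.e., $\alpha(I^{(s)}) = \alpha(\tilde{I}^{(s)})$. -/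

import Mathlib

open MvPolynomial Finset

/-- The monomial `x^a` in `K[x_1,…,x_n]`. -/
noncomputable def mon {K : Type*} [Field K] {n : ℕ} (a : Fin n → ℕ) :
    MvPolynomial (Fin n) K :=
  MvPolynomial.monomial (Finsupp.equivFunOnFinite.symm a) 1

/-- `α(L)`: the least total degree of a nonzero monomial of `L`. -/
noncomputable def alphaI {K σ : Type*} [Field K] (L : Ideal (MvPolynomial σ K)) : ℕ :=
  sInf {d : ℕ | ∃ m : σ →₀ ℕ, (m.sum fun _ e => e) = d ∧ MvPolynomial.monomial m (1 : K) ∈ L}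

/-- The weighted ideal `I_w`, generated by `x^{w(a)}` for monomials `x^a ∈ I`. -/
noncomputable def wIdeal {K : Type*} [Field K] {n : ℕ} (w : Fin n → ℕ)
    (I : Ideal (MvPolynomial (Fin n) K)) : Ideal (MvPolynomial (Fin n) K) :=
  Ideal.span {f | ∃ a : Fin n → ℕ, mon (K := K) a ∈ I ∧ f = mon (K := K) (fun i => w i * a i)}

/-- The irreducible monomial ideal `⟨x_i^{w i} : i ∈ A⟩`. -/
noncomputable def qIdeal {K : Type*} [Field K] {n : ℕ} (A : Finset (Fin n)) (w : Fin n → ℕ) :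
    Ideal (MvPolynomial (Fin n) K) :=
  Ideal.span ((fun i => (X i : MvPolynomial (Fin n) K) ^ w i) '' ↑A)

/-- `I` is a monomial ideal. -/
def IsMonomialIdeal {K : Type*} [Field K] {n : ℕ} (I : Ideal (MvPolynomial (Fin n) K)) : Prop :=
  ∃ S : Set (Fin n → ℕ), I = Ideal.span ((mon (K := K)) '' S)

/-- The `s`-th symbolic power `I^{(s)} = ⋂_{p ∈ Ass(I)} (I^s R_p ∩ R)`. -/
noncomputable def symbPow {R : Type*} [CommRing R] (I : Ideal R) (s : ℕ) : Ideal R :=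
  ⨅ p : {p : Ideal R // p ∈ associatedPrimes R (R ⧸ I)},
    letI : p.1.IsPrime := p.2.isPrime
    Ideal.comap (algebraMap R (Localization.AtPrime p.1))
      (Ideal.map (algebraMap R (Localization.AtPrime p.1)) (I ^ s))


open MvPolynomial Finset Pointwise

lemma prod_monomial' {K σ ι : Type*} [Field K] (t : Finset ι) (g : ι → (σ →₀ ℕ)) :
    (∏ i ∈ t, (monomial (g i) (1:K))) = monomial (∑ i ∈ t, g i) 1 := by
  induction t using Finset.cons_induction with
  | empty => simp [MvPolynomial.monomial_zero']
  | cons a t ha ih => rw [Finset.prod_cons, Finset.sum_cons, ih, monomial_mul, one_mul]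

lemma prod_pow_mem_pow' {R : Type*} [CommRing R] (Q : Ideal R) {ι : Type*} (t : Finset ι)
    (f : ι → R) (hf : ∀ i ∈ t, f i ∈ Q) (C : ι → ℕ) :
    (∏ i ∈ t, f i ^ C i) ∈ Q ^ (∑ i ∈ t, C i) := by
  induction t using Finset.cons_induction with
  | empty => simp [Ideal.one_eq_top]
  | cons a t ha ih =>
    rw [Finset.prod_cons, Finset.sum_cons, pow_add]
    exact Ideal.mul_mem_mul (Ideal.pow_mem_pow (hf a (Finset.mem_cons_self a t)) _)
      (ih fun i hi => hf i (Finset.mem_cons_of_mem hi))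

lemma exists_trunc' {ι : Type*} [DecidableEq ι] (t : Finset ι) (c : ι → ℕ) :
    ∀ s : ℕ, s ≤ ∑ i ∈ t, c i →
    ∃ C : ι → ℕ, (∀ i, C i ≤ c i) ∧ ∑ i ∈ t, C i = s := by
  induction t using Finset.cons_induction with
  | empty =>
    intro s hs
    simp only [Finset.sum_empty, Nat.le_zero] at hs
    exact ⟨fun _ => 0, fun _ => Nat.zero_le _, by simp [hs]⟩
  | cons a t ha ih =>
    intro s hs
    rw [Finset.sum_cons] at hs
    obtain ⟨C, hC, hsum⟩ := ih (s - min s (c a)) (by omega)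
    refine ⟨fun i => if i = a then min s (c a) else C i, ?_, ?_⟩
    · intro i
      by_cases h : i = a
      · simp [h]
      · simpa [h] using hC i
    · rw [Finset.sum_cons, if_pos rfl,
        Finset.sum_congr rfl (fun i hi => if_neg (fun h : i = a => ha (h ▸ hi))), hsum]
      omega

lemma mem_pow_iff' {K σ ι : Type*} [Field K] [DecidableEq ι] [DecidableEq σ]
    (A : Finset ι) (v : ι → σ) (hv : Set.InjOn v ↑A) (t : ι → ℕ) (s : ℕ) (m : σ →₀ ℕ) :
    monomial m (1:K) ∈ (Ideal.span ((fun i => (X (v i) : MvPolynomial σ K) ^ t i) '' ↑A)) ^ s ↔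
      ∃ c : ι → ℕ, (∀ i ∈ A, t i * c i ≤ m (v i)) ∧ s ≤ ∑ i ∈ A, c i := by
  classical
  constructor
  · intro h
    rw [Ideal.span, Submodule.span_pow] at h
    set Ts : Set (σ →₀ ℕ) := {g | ∃ f : Fin s → ι, (∀ k, f k ∈ A) ∧
        g = ∑ k : Fin s, Finsupp.single (v (f k)) (t (f k))} with hTs
    have himg : ((fun i => (X (v i) : MvPolynomial σ K) ^ t i) '' ↑A) ^ s
        = (fun g => monomial g (1:K)) '' Ts := by
      ext q
      constructor
      · intro hq
        obtain ⟨f, hf⟩ := Set.mem_pow.mp hq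
        choose idx hidxA hidx using fun k => (f k).2
        refine ⟨∑ k : Fin s, Finsupp.single (v (idx k)) (t (idx k)), ⟨idx, hidxA, rfl⟩, ?_⟩
        rw [← hf, List.prod_ofFn]
        have : ∀ k, ((f k : MvPolynomial σ K)) = monomial (Finsupp.single (v (idx k)) (t (idx k))) 1 := by
          intro k; rw [← hidx k]; exact X_pow_eq_monomial
        simp_rw [this]
        rw [prod_monomial']
      · rintro ⟨g, ⟨f, hfA, rfl⟩, rfl⟩
        refine Set.mem_pow.mpr ⟨fun k => ⟨(X (v (f k)) : MvPolynomial σ K) ^ t (f k),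
          Set.mem_image_of_mem _ (hfA k)⟩, ?_⟩
        rw [List.prod_ofFn]
        simp_rw [X_pow_eq_monomial]
        rw [prod_monomial']
    rw [himg] at h
    have h2 := mem_ideal_span_monomial_image.mp h
    have hm : m ∈ (monomial m (1:K)).support := by
      rw [support_monomial, if_neg one_ne_zero]; exact Finset.mem_singleton_self m
    obtain ⟨g, ⟨f, hfA, rfl⟩, hgle⟩ := h2 m hm
    refine ⟨fun i => #(univ.filter (fun k => f k = i)), ?_, ?_⟩
    · intro i hi
      have happ : (∑ k : Fin s, Finsupp.single (v (f k)) (t (f k))) (v i)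
          = t i * #(univ.filter (fun k => f k = i)) := by
        rw [Finsupp.finset_sum_apply]
        have : ∀ k : Fin s, (Finsupp.single (v (f k)) (t (f k))) (v i)
            = if f k = i then t i else 0 := by
          intro k
          rw [Finsupp.single_apply]
          by_cases h : f k = i
          · simp [h]
          · rw [if_neg (fun hv' => h (hv (hfA k) hi hv')), if_neg h]
        simp_rw [this]
        rw [← Finset.sum_filter, Finset.sum_const, smul_eq_mul, mul_comm]
      rw [← happ]
      exact hgle (v i)
    · have := Finset.card_eq_sum_card_fiberwise (f := f) (s := univ) (t := A)
        (fun k _ => hfA k)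
      rw [Finset.card_univ, Fintype.card_fin] at this
      exact this.le
  · rintro ⟨c, hc, hcs⟩
    obtain ⟨C, hCc, hCsum⟩ := exists_trunc' A c s hcs
    set g : σ →₀ ℕ := ∑ i ∈ A, Finsupp.single (v i) (t i * C i) with hg
    have hgm : g ≤ m := by
      intro x
      rw [hg, Finsupp.finset_sum_apply]
      by_cases hx : ∃ i ∈ A, v i = x
      · obtain ⟨i₀, hi₀, rfl⟩ := hx
        rw [Finset.sum_eq_single_of_mem i₀ hi₀
          (fun b hb hbne => by
            rw [Finsupp.single_apply, if_neg (fun h => hbne (hv hb hi₀ h))])]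
        rw [Finsupp.single_apply, if_pos rfl]
        exact le_trans (Nat.mul_le_mul_left _ (hCc i₀)) (hc i₀ hi₀)
      · rw [Finset.sum_eq_zero (fun i hi => by
          rw [Finsupp.single_apply, if_neg (fun h => hx ⟨i, hi, h⟩)])]
        exact Nat.zero_le _
    have key : monomial m (1:K)
        = monomial (m - g) 1 * ∏ i ∈ A, ((X (v i) : MvPolynomial σ K) ^ t i) ^ C i := by
      simp_rw [← pow_mul, X_pow_eq_monomial]
      rw [prod_monomial', monomial_mul, one_mul, ← hg, tsub_add_cancel_of_le hgm]
    rw [key, ← hCsum]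
    exact Ideal.mul_mem_left _ _ (prod_pow_mem_pow' _ A _
      (fun i hi => Ideal.subset_span (Set.mem_image_of_mem _ hi)) C)

theorem alpha_symbPow_eq_alpha_polarization {K : Type*} [Field K] {n r : ℕ}
    (A : Fin r → Finset (Fin n)) (w : Fin n → ℕ) (hw : ∀ i, 0 < w i)
    (hApos : ∀ j, (A j).Nonempty)
    (s : ℕ) (hs : 1 ≤ s) :
    alphaI (⨅ j, (qIdeal (K := K) (A j) w) ^ s) =
      alphaI (⨅ j, ⨅ d : (i : Fin n) → Fin (w i),
        (Ideal.span ((fun i => (X (⟨i, d i⟩ : Σ i : Fin n, Fin (w i)) :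
          MvPolynomial (Σ i : Fin n, Fin (w i)) K)) '' ↑(A j))) ^ s) := by
  classical
  have huniv : ∀ i : Fin n, (univ : Finset (Fin (w i))).Nonempty :=
    fun i => ⟨⟨0, hw i⟩, Finset.mem_univ _⟩
  set μ : ((Σ i : Fin n, Fin (w i)) →₀ ℕ) → Fin n → ℕ :=
    fun M i => (univ.inf' (huniv i) (fun d : Fin (w i) => M ⟨i, d⟩)) with hμ
  have memL : ∀ m : Fin n →₀ ℕ,
      ((monomial m (1:K)) ∈ ⨅ j, (qIdeal (K := K) (A j) w) ^ s) ↔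
        ∀ j, s ≤ ∑ i ∈ A j, m i / w i := by
    intro m
    rw [Submodule.mem_iInf]
    refine forall_congr' fun j => ?_
    refine (mem_pow_iff' (K := K) (A j) (fun i => i) Function.injective_id.injOn w s m).trans ?_
    constructor
    · rintro ⟨c, hc, hcs⟩
      refine le_trans hcs (Finset.sum_le_sum fun i hi => ?_)
      exact (Nat.le_div_iff_mul_le (hw i)).2 (by rw [mul_comm]; exact hc i hi)
    · intro h
      exact ⟨fun i => m i / w i, fun i hi => by rw [mul_comm]; exact Nat.div_mul_le_self _ _, h⟩
  have memR : ∀ M : (Σ i : Fin n, Fin (w i)) →₀ ℕ,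
      ((monomial M (1:K)) ∈ ⨅ j, ⨅ d : (i : Fin n) → Fin (w i),
        (Ideal.span ((fun i => (X (⟨i, d i⟩ : Σ i : Fin n, Fin (w i)) :
          MvPolynomial (Σ i : Fin n, Fin (w i)) K)) '' ↑(A j))) ^ s) ↔
        ∀ j, s ≤ ∑ i ∈ A j, μ M i := by
    intro M
    simp only [Submodule.mem_iInf]
    refine forall_congr' fun j => ?_
    have step : ∀ d : (i : Fin n) → Fin (w i),
        ((monomial M (1:K)) ∈ (Ideal.span ((fun i => (X (⟨i, d i⟩ : Σ i : Fin n, Fin (w i)) :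
          MvPolynomial (Σ i : Fin n, Fin (w i)) K)) '' ↑(A j))) ^ s) ↔
        ∃ c : Fin n → ℕ, (∀ i ∈ A j, c i ≤ M ⟨i, d i⟩) ∧ s ≤ ∑ i ∈ A j, c i := by
      intro d
      have himg : ((fun i => (X (⟨i, d i⟩ : Σ i : Fin n, Fin (w i)) :
            MvPolynomial (Σ i : Fin n, Fin (w i)) K)) '' ↑(A j))
          = ((fun i => (X ((fun i => (⟨i, d i⟩ : Σ i : Fin n, Fin (w i))) i) :
            MvPolynomial (Σ i : Fin n, Fin (w i)) K) ^ (fun _ : Fin n => 1) i) '' ↑(A j)) :=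
        Set.image_congr fun a _ => (pow_one _).symm
      rw [himg]
      have hinj : Set.InjOn (fun i => (⟨i, d i⟩ : Σ i : Fin n, Fin (w i))) ↑(A j) :=
        fun a _ b _ h => congrArg Sigma.fst h
      refine (mem_pow_iff' (K := K) (A j) _ hinj _ s M).trans ?_
      constructor
      · rintro ⟨c, hc, hcs⟩; exact ⟨c, fun i hi => by simpa using hc i hi, hcs⟩
      · rintro ⟨c, hc, hcs⟩; exact ⟨c, fun i hi => by simpa using hc i hi, hcs⟩
    constructor
    · intro h
      have hmin : ∀ i : Fin n, ∃ d : Fin (w i), μ M i = M ⟨i, d⟩ := by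
        intro i
        obtain ⟨b, _, hb⟩ := Finset.exists_mem_eq_inf' (huniv i) (fun d : Fin (w i) => M ⟨i, d⟩)
        exact ⟨b, hb⟩
      choose dstar hdstar using hmin
      obtain ⟨c, hc, hcs⟩ := (step dstar).mp (h dstar)
      refine le_trans hcs (Finset.sum_le_sum fun i hi => ?_)
      rw [hdstar i]; exact hc i hi
    · intro h d
      exact (step d).mpr ⟨fun i => μ M i,
        fun i _ => Finset.inf'_le _ (Finset.mem_univ (d i)), h⟩
  have degL_eq : ∀ m : Fin n →₀ ℕ, (m.sum fun _ e => e) = ∑ i : Fin n, m i :=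
    fun m => Finsupp.sum_fintype _ _ (fun _ => rfl)
  have degR_eq : ∀ M : (Σ i : Fin n, Fin (w i)) →₀ ℕ,
      (M.sum fun _ e => e) = ∑ i : Fin n, ∑ d : Fin (w i), M ⟨i, d⟩ := by
    intro M
    rw [Finsupp.sum_fintype _ _ (fun _ => rfl), ← Finset.univ_sigma_univ, Finset.sum_sigma]
  unfold alphaI
  apply le_antisymm
  · have hSRne : {d : ℕ | ∃ M : (Σ i : Fin n, Fin (w i)) →₀ ℕ, (M.sum fun _ e => e) = d ∧
        (monomial M (1:K)) ∈ ⨅ j, ⨅ d : (i : Fin n) → Fin (w i),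
        (Ideal.span ((fun i => (X (⟨i, d i⟩ : Σ i : Fin n, Fin (w i)) :
          MvPolynomial (Σ i : Fin n, Fin (w i)) K)) '' ↑(A j))) ^ s}.Nonempty := by
      refine ⟨_, Finsupp.equivFunOnFinite.symm (fun _ => s), rfl, (memR _).2 ?_⟩
      intro j
      have hconst : ∀ i ∈ A j, μ (Finsupp.equivFunOnFinite.symm (fun _ => s)) i = s := by
        intro i _
        simp [hμ, Finsupp.coe_equivFunOnFinite_symm]
      rw [Finset.sum_congr rfl hconst, Finset.sum_const, smul_eq_mul]
      calc s = 1 * s := (one_mul s).symm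
      _ ≤ #(A j) * s := Nat.mul_le_mul_right _ (Finset.card_pos.mpr (hApos j))
    obtain ⟨M, hMdeg, hMmem⟩ := Nat.sInf_mem hSRne
    rw [memR] at hMmem
    set m : Fin n →₀ ℕ := Finsupp.equivFunOnFinite.symm (fun i => w i * μ M i) with hm
    refine le_trans (Nat.sInf_le ⟨m, rfl, (memL m).2 ?_⟩) ?_
    · intro j
      refine le_trans (hMmem j) (le_of_eq (Finset.sum_congr rfl fun i hi => ?_))
      show μ M i = m i / w i
      rw [hm]
      simp [Finsupp.coe_equivFunOnFinite_symm, Nat.mul_div_cancel_left _ (hw i)]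
    · rw [← hMdeg, degL_eq, degR_eq]
      refine Finset.sum_le_sum fun i _ => ?_
      have hmi : m i = w i * μ M i := by
        rw [hm]; simp [Finsupp.coe_equivFunOnFinite_symm]
      rw [hmi]
      calc w i * μ M i = ∑ _d : Fin (w i), μ M i := by
            rw [Finset.sum_const, Finset.card_univ, Fintype.card_fin, smul_eq_mul]
      _ ≤ ∑ d : Fin (w i), M ⟨i, d⟩ :=
            Finset.sum_le_sum fun d _ => Finset.inf'_le _ (Finset.mem_univ d)
  · have hSLne : {d : ℕ | ∃ m : Fin n →₀ ℕ, (m.sum fun _ e => e) = d ∧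
        (monomial m (1:K)) ∈ ⨅ j, (qIdeal (K := K) (A j) w) ^ s}.Nonempty := by
      refine ⟨_, Finsupp.equivFunOnFinite.symm (fun i => w i * s), rfl, (memL _).2 ?_⟩
      intro j
      have hconst : ∀ i ∈ A j,
          (Finsupp.equivFunOnFinite.symm (fun i => w i * s) : Fin n →₀ ℕ) i / w i = s := by
        intro i _
        simp [Finsupp.coe_equivFunOnFinite_symm, Nat.mul_div_cancel_left _ (hw i)]
      rw [Finset.sum_congr rfl hconst, Finset.sum_const, smul_eq_mul]
      calc s = 1 * s := (one_mul s).symm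
      _ ≤ #(A j) * s := Nat.mul_le_mul_right _ (Finset.card_pos.mpr (hApos j))
    obtain ⟨m, hmdeg, hmmem⟩ := Nat.sInf_mem hSLne
    rw [memL] at hmmem
    set M : (Σ i : Fin n, Fin (w i)) →₀ ℕ :=
      Finsupp.equivFunOnFinite.symm (fun x => m x.1 / w x.1) with hM
    refine le_trans (Nat.sInf_le ⟨M, rfl, (memR M).2 ?_⟩) ?_
    · intro j
      refine le_trans (hmmem j) (le_of_eq (Finset.sum_congr rfl fun i hi => ?_))
      show m i / w i = μ M i
      rw [hμ, hM]
      simp [Finsupp.coe_equivFunOnFinite_symm, Finset.inf'_const]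
    · rw [← hmdeg, degL_eq, degR_eq]
      refine Finset.sum_le_sum fun i _ => ?_
      have hMx : ∀ d : Fin (w i), M ⟨i, d⟩ = m i / w i := by
        intro d; rw [hM]; simp [Finsupp.coe_equivFunOnFinite_symm]
      rw [Finset.sum_congr rfl (fun d _ => hMx d), Finset.sum_const, Finset.card_univ,
        Fintype.card_fin, smul_eq_mul, mul_comm]
      exact Nat.div_mul_le_self _ _
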